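/- Let n > 1 be odd, 0 ≤ ℓ ≤ (n-1)/2, and let k satisfy (n-1)/2 + ℓ < k ≤ n-1. Then the rational function (q^(2-4ℓ);q^4)_k / (q^4;q^4)_k is congruent to 0 modulo Φ_n(q^2), i.e., its numerator in lowest terms is divisible by Φ_n(q)Φ_n(-q). -/

import Mathlib

open Polynomial

noncomputable def q : RatFunc ℚ := RatFunc.X

/-- q-shifted factorial (x; s)_k = ∏_{j<k} (1 - x s^j). -/
noncomputable def qp (x s : RatFunc ℚ) (k : ℕ) : RatFunc ℚ :=
  ∏ j ∈ Finset.range k, (1 - x * s ^ j)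

/-- Congruence of rational functions modulo a polynomial: the difference can be
written as a ratio of polynomials with denominator coprime to P and numerator
divisible by P. -/
def modCong (x y : RatFunc ℚ) (P : Polynomial ℚ) : Prop :=
  ∃ r s : Polynomial ℚ, IsCoprime s P ∧ P ∣ r ∧
    x - y = algebraMap (Polynomial ℚ) (RatFunc ℚ) r / algebraMap (Polynomial ℚ) (RatFunc ℚ) s

lemma cyc_not_dvd {d N : ℕ} (hd : d ≠ 0) (hdN : ¬ d ∣ N) :
    ¬ cyclotomic d ℚ ∣ (1 - X ^ N : Polynomial ℚ) := by
  intro h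
  apply hdN
  have h2 : cyclotomic d ℂ ∣ (1 - X ^ N : Polynomial ℂ) := by
    have := Polynomial.map_dvd (algebraMap ℚ ℂ) h
    simpa [Polynomial.map_cyclotomic] using this
  obtain ⟨c, hc⟩ := h2
  have hζ : IsPrimitiveRoot (Complex.exp (2 * Real.pi * Complex.I / d)) d :=
    Complex.isPrimitiveRoot_exp d hd
  have hroot := hζ.isRoot_cyclotomic (Nat.pos_of_ne_zero hd)
  have := congrArg (Polynomial.eval (Complex.exp (2 * Real.pi * Complex.I / d))) hc
  simp [IsRoot.def.mp hroot] at this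
  exact (hζ.pow_eq_one_iff_dvd N).mp (by linear_combination -this)

theorem stmt14 (n : ℕ) (hodd : Odd n) (hn : 1 < n) (ℓ : ℕ) (hℓ : ℓ ≤ (n - 1) / 2)
    (k : ℕ) (hk1 : (n - 1) / 2 + ℓ < k) (hk2 : k ≤ n - 1) :
    modCong (qp (q ^ ((2 : ℤ) - 4 * ℓ)) (q ^ 4) k / qp (q ^ 4) (q ^ 4) k) 0
      ((cyclotomic n ℚ).comp (X ^ 2)) := by
  set A := algebraMap (Polynomial ℚ) (RatFunc ℚ) with hA
  have hq : (q : RatFunc ℚ) ≠ 0 := RatFunc.X_ne_zero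
  have hn3 : 3 ≤ n := by
    obtain ⟨m, hm⟩ := hodd; omega
  have h2n : ¬ (2 ∣ n) := by
    obtain ⟨m, hm⟩ := hodd; omega
  -- the polynomials
  set r : Polynomial ℚ := ∏ j ∈ Finset.range k, (X ^ (4 * ℓ) - X ^ (2 + 4 * j)) with hr
  set s : Polynomial ℚ :=
    X ^ (4 * ℓ * k) * ∏ j ∈ Finset.range k, (1 - X ^ (4 + 4 * j)) with hs
  refine ⟨r, s, ?_, ?_, ?_⟩
  · -- coprimality
    have hP : (cyclotomic n ℚ).comp (X ^ 2) = cyclotomic (n * 2) ℚ * cyclotomic n ℚ := by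
      rw [← expand_eq_comp_X_pow, cyclotomic_expand_eq_cyclotomic_mul Nat.prime_two h2n]
    rw [hP]
    have key : ∀ d : ℕ, 2 < d → (∀ j : ℕ, j < k → ¬ d ∣ (4 + 4 * j)) →
        IsCoprime s (cyclotomic d ℚ) := by
      intro d hd hdj
      have hirr : Irreducible (cyclotomic d ℚ) := cyclotomic.irreducible_rat (by omega)
      refine ((hirr.coprime_iff_not_dvd).mpr ?_).symm
      intro hdvd
      have hpr : Prime (cyclotomic d ℚ) := hirr.prime
      rcases hpr.dvd_mul.mp hdvd with h1 | h2
      · have hx : cyclotomic d ℚ ∣ X := hpr.dvd_of_dvd_pow h1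
        have hdeg := Polynomial.natDegree_le_of_dvd hx Polynomial.X_ne_zero
        rw [natDegree_cyclotomic, natDegree_X] at hdeg
        have he : Even (Nat.totient d) := Nat.totient_even hd
        have hp : 0 < Nat.totient d := Nat.totient_pos.mpr (by omega)
        obtain ⟨t, ht⟩ := he; omega
      · obtain ⟨j, hj, hjd⟩ := hpr.exists_mem_finset_dvd h2
        rw [Finset.mem_range] at hj
        exact cyc_not_dvd (by omega) (hdj j hj) hjd
    have hc2 : Nat.Coprime n 2 := hodd.coprime_two_right
    apply IsCoprime.mul_right
    · apply key (n * 2) (by omega)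
      intro j hj hdvd
      obtain ⟨c, hc⟩ := hdvd
      have hc' : 4 + 4 * j = 2 * (n * c) := by rw [hc]; ring
      have h1 : n ∣ 2 * (1 + j) := ⟨c, by omega⟩
      have h2 : n ∣ 1 + j := (Nat.Coprime.dvd_of_dvd_mul_left hc2 h1)
      have := Nat.le_of_dvd (by omega) h2
      omega
    · apply key n (by omega)
      intro j hj hdvd
      have hc4 : Nat.Coprime n 4 := Nat.Coprime.mul_right hc2 hc2
      have h1 : n ∣ 4 * (1 + j) := by
        obtain ⟨c, hc⟩ := hdvd; exact ⟨c, by omega⟩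
      have h2 : n ∣ 1 + j := Nat.Coprime.dvd_of_dvd_mul_left hc4 h1
      have := Nat.le_of_dvd (by omega) h2
      omega
  · -- divisibility
    have hj0 : (n - 1) / 2 + ℓ ∈ Finset.range k := Finset.mem_range.mpr hk1
    have hfac : (X : Polynomial ℚ) ^ (4 * ℓ) - X ^ (2 + 4 * ((n - 1) / 2 + ℓ))
        = X ^ (4 * ℓ) * (1 - X ^ (2 * n)) := by
      have hexp : 2 + 4 * ((n - 1) / 2 + ℓ) = 4 * ℓ + 2 * n := by
        obtain ⟨m, hm⟩ := hodd; omega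
      rw [hexp, pow_add, mul_sub, mul_one]
    have hdvd1 : (cyclotomic n ℚ).comp (X ^ 2) ∣ (1 - X ^ (2 * n) : Polynomial ℚ) := by
      have h0 : cyclotomic n ℚ ∣ (X ^ n - 1 : Polynomial ℚ) := cyclotomic.dvd_X_pow_sub_one n ℚ
      have h1 := map_dvd (Polynomial.expand ℚ 2) h0
      rw [expand_eq_comp_X_pow] at h1
      have h2 : (Polynomial.expand ℚ 2) ((X : Polynomial ℚ) ^ n - 1) = X ^ (2 * n) - 1 := by
        rw [map_sub, map_one, map_pow, Polynomial.expand_X, ← pow_mul, mul_comm]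
      rw [h2] at h1
      exact (dvd_neg.mpr h1).trans (by rw [neg_sub])
    calc (cyclotomic n ℚ).comp (X ^ 2) ∣
        X ^ (4 * ℓ) - X ^ (2 + 4 * ((n - 1) / 2 + ℓ)) := by
          rw [hfac]; exact Dvd.dvd.mul_left hdvd1 _
      _ ∣ r := Finset.dvd_prod_of_mem _ hj0
  · -- the identity
    rw [sub_zero]
    have hAr : A r = ∏ j ∈ Finset.range k, ((q : RatFunc ℚ) ^ (4 * ℓ) - q ^ (2 + 4 * j)) := by
      rw [hr, map_prod]
      simp [q, hA, RatFunc.algebraMap_X]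
    have hAs : A s = q ^ (4 * ℓ * k) * qp (q ^ 4) (q ^ 4) k := by
      rw [hs, map_mul, map_prod, qp]
      simp [q, hA, RatFunc.algebraMap_X, ← pow_mul, ← pow_add]
    have hterm : ∀ j : ℕ, (q : RatFunc ℚ) ^ (4 * ℓ) - q ^ (2 + 4 * j)
        = q ^ (4 * ℓ) * (1 - q ^ ((2 : ℤ) - 4 * ℓ) * (q ^ 4) ^ j) := by
      intro j
      have h1 : (q : RatFunc ℚ) ^ (4 * ℓ) * q ^ ((2 : ℤ) - 4 * ℓ) = q ^ 2 := by
        rw [← zpow_natCast q (4 * ℓ), ← zpow_add₀ hq,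
          show ((4 * ℓ : ℕ) : ℤ) + (2 - 4 * ℓ) = ((2 : ℕ) : ℤ) by push_cast; ring,
          zpow_natCast]
      rw [mul_sub, mul_one, ← mul_assoc, h1]
      rw [← pow_mul, ← pow_add]
    have hAr' : A r = q ^ (4 * ℓ * k) * qp (q ^ ((2 : ℤ) - 4 * ℓ)) (q ^ 4) k := by
      rw [hAr, qp]
      rw [show ((q : RatFunc ℚ) ^ (4 * ℓ * k)) = ∏ _j ∈ Finset.range k, q ^ (4 * ℓ) by
        rw [Finset.prod_const, Finset.card_range, ← pow_mul]]
      rw [← Finset.prod_mul_distrib]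
      exact Finset.prod_congr rfl fun j _ => hterm j
    rw [hAr', hAs, mul_div_mul_left _ _ (pow_ne_zero _ hq)]
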